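/- Let G be a graph with no isolated vertex, maximum degree Δ and order n. For any w-dominating function f with associated level sets V_0,...,V_l, where w=(w_0,...,w_l) satisfies w_0 ≥ ... ≥ w_l, we have Δ·ω(f) ≥ w_0·n + Σ_{i=1}^{l} (w_i − w_0)|V_i|. -/

import Mathlib

open scoped Classical
open Finset SimpleGraph

/-- A `w`-dominating function: `f : V → {0,…,l}` with `f(N(v)) ≥ w_{f(v)}` for all `v`. -/
def WDom {V : Type*} [Fintype V] (G : SimpleGraph V) {l : ℕ} (w : Fin (l+1) → ℕ)
    (f : V → Fin (l+1)) : Prop :=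
  ∀ v, w (f v) ≤ ∑ u, if G.Adj v u then (f u : ℕ) else 0

/-- The `w`-domination number. -/
noncomputable def gammaW {V : Type*} [Fintype V] (G : SimpleGraph V) {l : ℕ}
    (w : Fin (l+1) → ℕ) : ℕ :=
  sInf {n | ∃ f : V → Fin (l+1), WDom G w f ∧ ∑ v, (f v : ℕ) = n}

/-- The Italian domination number `γ_I = γ_{(2,0,0)}`. -/
noncomputable def gammaI {V : Type*} [Fintype V] (G : SimpleGraph V) : ℕ :=
  gammaW G ![2,0,0]

/-- The domination number. -/
noncomputable def gamma {V : Type*} [Fintype V] (G : SimpleGraph V) : ℕ :=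
  sInf {n | ∃ S : Finset V, (∀ v, v ∈ S ∨ ∃ u ∈ S, G.Adj u v) ∧ S.card = n}

/-- The total domination number. -/
noncomputable def gammaT {V : Type*} [Fintype V] (G : SimpleGraph V) : ℕ :=
  sInf {n | ∃ S : Finset V, (∀ v, ∃ u ∈ S, G.Adj u v) ∧ S.card = n}

/-- The 2-domination number. -/
noncomputable def gamma2 {V : Type*} [Fintype V] (G : SimpleGraph V) : ℕ :=
  sInf {n | ∃ S : Finset V, (∀ v ∉ S, 2 ≤ (S.filter (fun u => G.Adj u v)).card) ∧ S.card = n}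

/-- The double domination number. -/
noncomputable def gammaX2 {V : Type*} [Fintype V] (G : SimpleGraph V) : ℕ :=
  sInf {n | ∃ S : Finset V, (∀ v, 2 ≤ (S.filter (fun u => u = v ∨ G.Adj u v)).card) ∧ S.card = n}

/-- The double total domination number. -/
noncomputable def gammaX2T {V : Type*} [Fintype V] (G : SimpleGraph V) : ℕ :=
  sInf {n | ∃ S : Finset V, (∀ v, 2 ≤ (S.filter (fun u => G.Adj u v)).card) ∧ S.card = n}

/-- The lexicographic product `G ∘ H`. -/
def lexProd {V W : Type*} (G : SimpleGraph V) (H : SimpleGraph W) : SimpleGraph (V × W) where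
  Adj x y := G.Adj x.1 y.1 ∨ (x.1 = y.1 ∧ H.Adj x.2 y.2)
  symm := by
    refine ⟨?_⟩
    rintro x y (h | ⟨h1, h2⟩)
    · exact Or.inl h.symm
    · exact Or.inr ⟨h1.symm, h2.symm⟩
  loopless := by
    refine ⟨?_⟩
    rintro x (h | ⟨_, h⟩)
    · exact h.ne rfl
    · exact h.ne rfl

theorem maxDegree_mul_weight_lower_bound {V : Type*} [Fintype V] (G : SimpleGraph V)
    (hG : ∀ v, ∃ u, G.Adj v u) {l : ℕ} (w : Fin (l+1) → ℕ)
    (hw : Antitone w) (h0 : 1 ≤ w 0) (f : V → Fin (l+1)) (hf : WDom G w f) :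
    (w 0 : ℤ) * Fintype.card V +
      ∑ i ∈ Finset.univ.filter (fun i : Fin (l+1) => i ≠ 0),
        ((w i : ℤ) - (w 0 : ℤ)) * ((Finset.univ.filter (fun v => f v = i)).card : ℤ)
      ≤ (G.maxDegree : ℤ) * ((∑ v, (f v : ℕ) : ℕ) : ℤ) := by

  classical
  -- Step 1: natural number inequality  Σ w(f v) ≤ Δ · Σ f v
  have hnat : ∑ v, w (f v) ≤ G.maxDegree * ∑ v, (f v : ℕ) := by
    calc ∑ v, w (f v)
        ≤ ∑ v, ∑ u, (if G.Adj v u then (f u : ℕ) else 0) :=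
          Finset.sum_le_sum fun v _ => hf v
      _ = ∑ u, ∑ v, (if G.Adj v u then (f u : ℕ) else 0) := Finset.sum_comm
      _ = ∑ u, G.degree u * (f u : ℕ) := by
          refine Finset.sum_congr rfl fun u _ => ?_
          rw [← Finset.sum_filter, Finset.sum_const, smul_eq_mul]
          congr 1
          rw [← SimpleGraph.card_neighborFinset_eq_degree, SimpleGraph.neighborFinset_eq_filter]
          congr 1
          ext v
          simp [SimpleGraph.adj_comm]
      _ ≤ ∑ u, G.maxDegree * (f u : ℕ) :=
          Finset.sum_le_sum fun u _ => Nat.mul_le_mul_right _ (G.degree_le_maxDegree u)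
      _ = G.maxDegree * ∑ v, (f v : ℕ) := (Finset.mul_sum _ _ _).symm
  -- Step 2: the left side equals Σ_v w(f v) over ℤ
  have hfib : ∑ i : Fin (l+1), ∑ v ∈ Finset.univ.filter (fun v => f v = i), (w (f v) : ℤ)
      = ∑ v, (w (f v) : ℤ) :=
    Finset.sum_fiberwise _ _ _
  have heq : (w 0 : ℤ) * Fintype.card V +
      ∑ i ∈ Finset.univ.filter (fun i : Fin (l+1) => i ≠ 0),
        ((w i : ℤ) - (w 0 : ℤ)) * ((Finset.univ.filter (fun v => f v = i)).card : ℤ)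
      = ∑ v, (w (f v) : ℤ) := by
    have hcard : (Fintype.card V : ℤ)
        = ∑ i : Fin (l+1), ((Finset.univ.filter (fun v => f v = i)).card : ℤ) := by
      rw [← Nat.cast_sum]
      norm_cast
      exact Finset.card_eq_sum_card_fiberwise fun v _ => Finset.mem_univ (f v)
    have hext : ∑ i ∈ Finset.univ.filter (fun i : Fin (l+1) => i ≠ 0),
        ((w i : ℤ) - (w 0 : ℤ)) * ((Finset.univ.filter (fun v => f v = i)).card : ℤ)
        = ∑ i : Fin (l+1),
        ((w i : ℤ) - (w 0 : ℤ)) * ((Finset.univ.filter (fun v => f v = i)).card : ℤ) := by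
      rw [Finset.sum_filter]
      refine Finset.sum_congr rfl fun i _ => ?_
      by_cases h : i = 0
      · simp [h]
      · simp [h]
    rw [hext, hcard, Finset.mul_sum, ← Finset.sum_add_distrib, ← hfib]
    refine Finset.sum_congr rfl fun i _ => ?_
    have : ∑ v ∈ Finset.univ.filter (fun v => f v = i), (w (f v) : ℤ)
        = (w i : ℤ) * ((Finset.univ.filter (fun v => f v = i)).card : ℤ) := by
      rw [Finset.sum_congr rfl (fun v hv => by
        rw [(Finset.mem_filter.mp hv).2]), Finset.sum_const, nsmul_eq_mul, mul_comm]
    rw [this]; ring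
  rw [heq]
  calc ∑ v, (w (f v) : ℤ) = ((∑ v, w (f v) : ℕ) : ℤ) := by push_cast; ring
    _ ≤ ((G.maxDegree * ∑ v, (f v : ℕ) : ℕ) : ℤ) := by exact_mod_cast hnat
    _ = (G.maxDegree : ℤ) * ((∑ v, (f v : ℕ) : ℕ) : ℤ) := by push_cast; ring
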